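/- arXiv:2207.05489 — 3 statements merged into one kernel-verified Lean document; each statement's English description precedes it below -/
import Mathlib

section
/- Suppose there exists ε > 0 with E^Q[e^{ε ℓ(Z^{(1)})}] < ∞ and E^Q[e^{ε Z^{(2)}}] < ∞. Then, under the reference measure Q, for any 0 ≤ u ≤ t ≤ T with t − u ≤ ε one has E^Q[exp(∫_u^t λ_{s−} ds)] < ∞, where λ is the dynamic contagion intensity. -/
open MeasureTheory ProbabilityTheory Real
open scoped ENNReal

lemma prod_range_eq_tsum_indicator {Ω : Type*} (N : Ω → ℕ) (g : ℕ → Ω → ℝ≥0∞) (ω : Ω) :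
    ∏ j ∈ Finset.range (N ω), g j ω
      = ∑' k : ℕ, ({ω' | N ω' = k}).indicator (fun ω' => ∏ j ∈ Finset.range k, g j ω') ω := by
  have hne : ∀ k : ℕ, k ≠ N ω → ({ω' | N ω' = k}).indicator
      (fun ω' => ∏ j ∈ Finset.range k, g j ω') ω = 0 := fun k hk => by
    apply Set.indicator_of_notMem
    intro hmem
    exact hk (Eq.symm hmem)
  rw [tsum_eq_single (N ω) hne]
  exact Eq.symm (Set.indicator_of_mem (show ω ∈ {ω' | N ω' = N ω} from rfl) _)

lemma measurable_prod_range_count {Ω : Type*} {m : MeasurableSpace Ω} {N : Ω → ℕ}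
    (hN : Measurable[m] N) {g : ℕ → Ω → ℝ≥0∞} (hg : ∀ j, Measurable[m] (g j)) :
    Measurable[m] fun ω => ∏ j ∈ Finset.range (N ω), g j ω := by
  have hA : ∀ k : ℕ, MeasurableSet[m] {ω' | N ω' = k} := fun k =>
    hN (measurableSet_singleton k)
  have h : (fun ω => ∏ j ∈ Finset.range (N ω), g j ω)
      = fun ω => ∑' k : ℕ, ({ω' | N ω' = k}).indicator
          (fun ω' => ∏ j ∈ Finset.range k, g j ω') ω :=
    funext fun ω => prod_range_eq_tsum_indicator N g ω
  rw [h]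
  exact Measurable.ennreal_tsum fun k =>
    (Finset.measurable_prod _ fun j _ => hg j).indicator (hA k)

lemma lintegral_prod_range_count {Ω : Type*} {mΩ : MeasurableSpace Ω} {μ : Measure Ω}
    [IsProbabilityMeasure μ] {mN mZ : MeasurableSpace Ω} (hmN : mN ≤ mΩ) (hmZ : mZ ≤ mΩ)
    (hind : Indep mN mZ μ) {N : Ω → ℕ} (hN : Measurable[mN] N)
    {g : ℕ → Ω → ℝ≥0∞} (hg : ∀ j, Measurable[mZ] (g j))
    (hgiid : iIndepFun g μ) :
    ∫⁻ ω, ∏ j ∈ Finset.range (N ω), g j ω ∂μ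
      = ∑' k : ℕ, μ {ω | N ω = k} * ∏ j ∈ Finset.range k, ∫⁻ ω, g j ω ∂μ := by
  have hgm : ∀ j, Measurable[mΩ] (g j) := fun j => (hg j).mono hmZ le_rfl
  have hNm : Measurable[mΩ] N := hN.mono hmN le_rfl
  have hA : ∀ k : ℕ, MeasurableSet[mΩ] {ω' | N ω' = k} := fun k =>
    hNm (measurableSet_singleton k)
  have hAN : ∀ k : ℕ, MeasurableSet[mN] {ω' | N ω' = k} := fun k =>
    hN (measurableSet_singleton k)
  have hprod : ∀ k : ℕ, ∫⁻ ω, ∏ j ∈ Finset.range k, g j ω ∂μ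
      = ∏ j ∈ Finset.range k, ∫⁻ ω, g j ω ∂μ := by
    intro k
    induction k with
    | zero => simp
    | succ n ih =>
      have hmul : ∫⁻ ω, ((∏ j ∈ Finset.range n, g j) * g n) ω ∂μ
          = (∫⁻ ω, (∏ j ∈ Finset.range n, g j) ω ∂μ) * ∫⁻ ω, g n ω ∂μ :=
        lintegral_mul_eq_lintegral_mul_lintegral_of_indepFun
          (by rw [Finset.prod_fn]; exact Finset.measurable_prod _ fun j _ => hgm j)
          (hgm n) (hgiid.indepFun_prod_range_succ hgm n)
      simp only [Finset.prod_apply, Pi.mul_apply] at hmul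
      rw [Finset.prod_range_succ, ← ih, ← hmul]
      refine lintegral_congr fun ω => ?_
      simp [Finset.prod_range_succ]
  calc ∫⁻ ω, ∏ j ∈ Finset.range (N ω), g j ω ∂μ
      = ∫⁻ ω, ∑' k : ℕ, ({ω' | N ω' = k}).indicator
          (fun ω' => ∏ j ∈ Finset.range k, g j ω') ω ∂μ :=
        lintegral_congr fun ω => prod_range_eq_tsum_indicator N g ω
    _ = ∑' k : ℕ, ∫⁻ ω, ({ω' | N ω' = k}).indicator
          (fun ω' => ∏ j ∈ Finset.range k, g j ω') ω ∂μ :=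
        lintegral_tsum fun k => ((Finset.measurable_prod _ fun j _ => hgm j).indicator
          (hA k)).aemeasurable
    _ = ∑' k : ℕ, μ {ω | N ω = k} * ∏ j ∈ Finset.range k, ∫⁻ ω, g j ω ∂μ := by
        refine tsum_congr fun k => ?_
        have hsplit : ∀ ω, ({ω' | N ω' = k}).indicator
            (fun ω' => ∏ j ∈ Finset.range k, g j ω') ω
            = ({ω' | N ω' = k}).indicator (fun _ => (1 : ℝ≥0∞)) ω
              * ∏ j ∈ Finset.range k, g j ω := by
          intro ω
          by_cases h : ω ∈ {ω' | N ω' = k} <;>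
            simp [Set.indicator_of_mem, Set.indicator_of_notMem, h]
        simp_rw [hsplit]
        rw [lintegral_mul_eq_lintegral_mul_lintegral_of_independent_measurableSpace hmN hmZ hind
            ((@measurable_const _ _ _ mN _).indicator (hAN k))
            (Finset.measurable_prod _ fun j _ => hg j),
          hprod k]
        congr 1
        rw [lintegral_indicator (hA k)]
        simp

/-- **Finite exponential moment of the integrated intensity under the reference measure.**
Suppose there exists `ε > 0` with `E^Q[e^{ε ℓ(Z¹)}] < ∞` and `E^Q[e^{ε Z²}] < ∞`.  Then, under
the reference measure `Q` (here `μ`, under which `N¹` is a standard Poisson process, `N²` is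
Poisson of rate `ρ`, and `N¹, N², {Z¹_n}, {Z²_n}` are mutually independent), for any
`0 ≤ u ≤ t ≤ T` with `t − u ≤ ε` one has `E^Q[exp(∫_u^t λ_s ds)] < ∞`, where `λ` is the
dynamic contagion intensity. -/
theorem finite_exponential_moment_integrated_intensity
    {Ω : Type*} {mΩ : MeasurableSpace Ω} (μ : Measure Ω) [IsProbabilityMeasure μ]
    (α β lam0 ρ T : ℝ) (hα : 0 < α) (hβ : 0 < β) (hlam0 : 0 < lam0) (hρ : 0 < ρ) (hT : 0 < T)
    (ℓ : ℝ → ℝ) (hℓmeas : Measurable ℓ) (hℓpos : ∀ z, 0 ≤ ℓ z)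
    (N1 N2 : ℝ → Ω → ℕ) (T1 T2 Z1 Z2 : ℕ → Ω → ℝ)
    (hN1meas : ∀ t, Measurable (N1 t)) (hN2meas : ∀ t, Measurable (N2 t))
    (hZ1meas : ∀ n, Measurable (Z1 n)) (hZ2meas : ∀ n, Measurable (Z2 n))
    (hT1meas : ∀ n, Measurable (T1 n)) (hT2meas : ∀ n, Measurable (T2 n))
    (hZ1pos : ∀ n ω, 0 ≤ Z1 n ω) (hZ2pos : ∀ n ω, 0 ≤ Z2 n ω)
    -- the `T^{(i)}` enumerate the jump times of `N^{(i)}`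
    (hτ1 : ∀ t : ℝ, ∀ ω, ∀ n : ℕ, n < N1 t ω ↔ T1 n ω ≤ t)
    (hτ2 : ∀ t : ℝ, ∀ ω, ∀ n : ℕ, n < N2 t ω ↔ T2 n ω ≤ t)
    (hT1pos : ∀ n ω, 0 < T1 n ω) (hT2pos : ∀ n ω, 0 < T2 n ω)
    -- Poisson marginals: `N¹` standard, `N²` of rate `ρ`
    (hP1 : ∀ t : ℝ, 0 ≤ t → ∀ k : ℕ,
      μ {ω | N1 t ω = k} = ENNReal.ofReal (Real.exp (-t) * t ^ k / k.factorial))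
    (hP2 : ∀ t : ℝ, 0 ≤ t → ∀ k : ℕ,
      μ {ω | N2 t ω = k} = ENNReal.ofReal (Real.exp (-(ρ * t)) * (ρ * t) ^ k / k.factorial))
    -- the mark sequences are i.i.d.
    (hiid1 : iIndepFun (fun n => Z1 n) μ)
    (hid1 : ∀ n, μ.map (Z1 n) = μ.map (Z1 0))
    (hiid2 : iIndepFun (fun n => Z2 n) μ)
    (hid2 : ∀ n, μ.map (Z2 n) = μ.map (Z2 0))
    -- mutual independence of `N¹`, `N²`, `{Z¹_n}`, `{Z²_n}`
    (hindep : iIndep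
      (![MeasurableSpace.comap (fun ω => fun t : ℝ => N1 t ω) inferInstance,
         MeasurableSpace.comap (fun ω => fun t : ℝ => N2 t ω) inferInstance,
         MeasurableSpace.comap (fun ω => fun n : ℕ => Z1 n ω) inferInstance,
         MeasurableSpace.comap (fun ω => fun n : ℕ => Z2 n ω) inferInstance]) μ)
    -- finite exponential moments of order `ε`
    (ε : ℝ) (hε : 0 < ε)
    (hexpℓ : Integrable (fun ω => Real.exp (ε * ℓ (Z1 0 ω))) μ)
    (hexpZ2 : Integrable (fun ω => Real.exp (ε * Z2 0 ω)) μ)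
    -- the dynamic contagion intensity
    (lam : ℝ → Ω → ℝ)
    (hlam : ∀ t ω, lam t ω
      = β + (lam0 - β) * Real.exp (-(α * t))
        + ∑ j ∈ Finset.range (N1 t ω), Real.exp (-(α * (t - T1 j ω))) * ℓ (Z1 j ω)
        + ∑ j ∈ Finset.range (N2 t ω), Real.exp (-(α * (t - T2 j ω))) * Z2 j ω) :
    ∀ u t : ℝ, 0 ≤ u → u ≤ t → t ≤ T → t - u ≤ ε →
      ∫⁻ ω, ENNReal.ofReal (Real.exp (∫ s in Set.Ioc u t, lam s ω)) ∂μ < ⊤ := by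

  intro u t hu hut htT htu
  have hTnn : (0 : ℝ) ≤ T := hT.le
  have hρTnn : (0 : ℝ) ≤ ρ * T := mul_nonneg hρ.le hTnn
  set M : Fin 4 → MeasurableSpace Ω :=
    ![MeasurableSpace.comap (fun ω => fun t : ℝ => N1 t ω) inferInstance,
      MeasurableSpace.comap (fun ω => fun t : ℝ => N2 t ω) inferInstance,
      MeasurableSpace.comap (fun ω => fun n : ℕ => Z1 n ω) inferInstance,
      MeasurableSpace.comap (fun ω => fun n : ℕ => Z2 n ω) inferInstance] with hMdef
  have hmap0 : Measurable fun ω => fun s : ℝ => N1 s ω := measurable_pi_lambda _ hN1meas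
  have hmap1 : Measurable fun ω => fun s : ℝ => N2 s ω := measurable_pi_lambda _ hN2meas
  have hmap2 : Measurable fun ω => fun n : ℕ => Z1 n ω := measurable_pi_lambda _ hZ1meas
  have hmap3 : Measurable fun ω => fun n : ℕ => Z2 n ω := measurable_pi_lambda _ hZ2meas
  have hle : ∀ i, M i ≤ mΩ := by
    intro i
    fin_cases i
    · exact measurable_iff_comap_le.mp hmap0
    · exact measurable_iff_comap_le.mp hmap1
    · exact measurable_iff_comap_le.mp hmap2
    · exact measurable_iff_comap_le.mp hmap3
  have hMN1 : Measurable[M 0] (N1 T) := by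
    have h : Measurable[M 0] fun ω => (fun s : ℝ => N1 s ω) := Measurable.of_comap_le le_rfl
    exact (measurable_pi_apply T).comp h
  have hMN2 : Measurable[M 1] (N2 T) := by
    have h : Measurable[M 1] fun ω => (fun s : ℝ => N2 s ω) := Measurable.of_comap_le le_rfl
    exact (measurable_pi_apply T).comp h
  have hMZ1 : ∀ j, Measurable[M 2] (Z1 j) := by
    intro j
    have h : Measurable[M 2] fun ω => (fun n : ℕ => Z1 n ω) := Measurable.of_comap_le le_rfl
    exact (measurable_pi_apply j).comp h
  have hMZ2 : ∀ j, Measurable[M 3] (Z2 j) := by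
    intro j
    have h : Measurable[M 3] fun ω => (fun n : ℕ => Z2 n ω) := Measurable.of_comap_le le_rfl
    exact (measurable_pi_apply j).comp h
  set g1 : ℕ → Ω → ℝ≥0∞ := fun j ω => ENNReal.ofReal (Real.exp (ε * ℓ (Z1 j ω))) with hg1def
  set g2 : ℕ → Ω → ℝ≥0∞ := fun j ω => ENNReal.ofReal (Real.exp (ε * Z2 j ω)) with hg2def
  have hφ1 : Measurable fun x : ℝ => ENNReal.ofReal (Real.exp (ε * ℓ x)) :=
    ENNReal.measurable_ofReal.comp (Real.measurable_exp.comp (hℓmeas.const_mul ε))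
  have hφ2 : Measurable fun x : ℝ => ENNReal.ofReal (Real.exp (ε * x)) :=
    ENNReal.measurable_ofReal.comp (Real.measurable_exp.comp (measurable_id.const_mul ε))
  have hg1Z : ∀ j, Measurable[M 2] (g1 j) := fun j => hφ1.comp (hMZ1 j)
  have hg2Z : ∀ j, Measurable[M 3] (g2 j) := fun j => hφ2.comp (hMZ2 j)
  have hg1iid : iIndepFun g1 μ :=
    hiid1.comp (fun _ x => ENNReal.ofReal (Real.exp (ε * ℓ x))) fun _ => hφ1
  have hg2iid : iIndepFun g2 μ :=
    hiid2.comp (fun _ x => ENNReal.ofReal (Real.exp (ε * x))) fun _ => hφ2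
  set r1 : ℝ := ∫ ω, Real.exp (ε * ℓ (Z1 0 ω)) ∂μ with hr1def
  set r2 : ℝ := ∫ ω, Real.exp (ε * Z2 0 ω) ∂μ with hr2def
  have hr1nn : 0 ≤ r1 := integral_nonneg fun ω => (Real.exp_pos _).le
  have hr2nn : 0 ≤ r2 := integral_nonneg fun ω => (Real.exp_pos _).le
  have hint1 : ∀ j, ∫⁻ ω, g1 j ω ∂μ = ENNReal.ofReal r1 := by
    intro j
    have h1 : ∫⁻ ω, g1 j ω ∂μ
        = ∫⁻ x, ENNReal.ofReal (Real.exp (ε * ℓ x)) ∂(μ.map (Z1 j)) :=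
      (lintegral_map hφ1 (hZ1meas j)).symm
    rw [h1, hid1 j, lintegral_map hφ1 (hZ1meas 0)]
    exact (ofReal_integral_eq_lintegral_ofReal hexpℓ
      (ae_of_all _ fun ω => (Real.exp_pos _).le)).symm
  have hint2 : ∀ j, ∫⁻ ω, g2 j ω ∂μ = ENNReal.ofReal r2 := by
    intro j
    have h1 : ∫⁻ ω, g2 j ω ∂μ
        = ∫⁻ x, ENNReal.ofReal (Real.exp (ε * x)) ∂(μ.map (Z2 j)) :=
      (lintegral_map hφ2 (hZ2meas j)).symm
    rw [h1, hid2 j, lintegral_map hφ2 (hZ2meas 0)]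
    exact (ofReal_integral_eq_lintegral_ofReal hexpZ2
      (ae_of_all _ fun ω => (Real.exp_pos _).le)).symm
  -- the two Poisson factors
  have hF1 : ∫⁻ ω, ∏ j ∈ Finset.range (N1 T ω), g1 j ω ∂μ
      = ENNReal.ofReal (∑' k : ℕ, Real.exp (-T) * (T * r1) ^ k / k.factorial) := by
    rw [lintegral_prod_range_count (hle 0) (hle 2)
        (hindep.indep (show (0 : Fin 4) ≠ 2 by decide)) hMN1 hg1Z hg1iid]
    have hsummable : Summable fun k : ℕ => Real.exp (-T) * (T * r1) ^ k / k.factorial := by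
      simpa [mul_div_assoc] using
        (Real.summable_pow_div_factorial (T * r1)).mul_left (Real.exp (-T))
    rw [ENNReal.ofReal_tsum_of_nonneg (fun k => by positivity) hsummable]
    refine tsum_congr fun k => ?_
    rw [hP1 T hTnn k]
    simp_rw [hint1]
    rw [Finset.prod_const, Finset.card_range, ← ENNReal.ofReal_pow hr1nn,
      ← ENNReal.ofReal_mul (by positivity)]
    congr 1
    rw [mul_pow]
    ring
  have hF2 : ∫⁻ ω, ∏ j ∈ Finset.range (N2 T ω), g2 j ω ∂μ
      = ENNReal.ofReal (∑' k : ℕ, Real.exp (-(ρ * T)) * (ρ * T * r2) ^ k / k.factorial) := by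
    rw [lintegral_prod_range_count (hle 1) (hle 3)
        (hindep.indep (show (1 : Fin 4) ≠ 3 by decide)) hMN2 hg2Z hg2iid]
    have hsummable : Summable fun k : ℕ =>
        Real.exp (-(ρ * T)) * (ρ * T * r2) ^ k / k.factorial := by
      simpa [mul_div_assoc] using
        (Real.summable_pow_div_factorial (ρ * T * r2)).mul_left (Real.exp (-(ρ * T)))
    rw [ENNReal.ofReal_tsum_of_nonneg (fun k => by positivity) hsummable]
    refine tsum_congr fun k => ?_
    rw [hP2 T hTnn k]
    simp_rw [hint2]
    rw [Finset.prod_const, Finset.card_range, ← ENNReal.ofReal_pow hr2nn,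
      ← ENNReal.ofReal_mul (by positivity)]
    congr 1
    rw [mul_pow]
    ring
  -- independence of the two factors
  have hdisj : Disjoint ({0, 2} : Set (Fin 4)) ({1, 3} : Set (Fin 4)) := by
    rw [Set.disjoint_iff_forall_ne]
    intro a ha b hb
    simp only [Set.mem_insert_iff, Set.mem_singleton_iff] at ha hb
    rcases ha with rfl | rfl <;> rcases hb with rfl | rfl <;> decide
  have hIndSup : Indep (M 0 ⊔ M 2) (M 1 ⊔ M 3) μ := by
    have h := indep_iSup_of_disjoint hle hindep hdisj
    rwa [iSup_insert, iSup_singleton, iSup_insert, iSup_singleton] at h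
  have hG1 : Measurable[M 0 ⊔ M 2] fun ω => ∏ j ∈ Finset.range (N1 T ω), g1 j ω :=
    measurable_prod_range_count (hMN1.mono (le_sup_left : M 0 ≤ M 0 ⊔ M 2) le_rfl)
      fun j => (hg1Z j).mono (le_sup_right : M 2 ≤ M 0 ⊔ M 2) le_rfl
  have hG2 : Measurable[M 1 ⊔ M 3] fun ω => ∏ j ∈ Finset.range (N2 T ω), g2 j ω :=
    measurable_prod_range_count (hMN2.mono (le_sup_left : M 1 ≤ M 1 ⊔ M 3) le_rfl)
      fun j => (hg2Z j).mono (le_sup_right : M 3 ≤ M 1 ⊔ M 3) le_rfl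
  -- pointwise bound
  have hpt : ∀ ω, ENNReal.ofReal (Real.exp (∫ s in Set.Ioc u t, lam s ω))
      ≤ ENNReal.ofReal (Real.exp (ε * max lam0 β)) *
        ((∏ j ∈ Finset.range (N1 T ω), g1 j ω) * ∏ j ∈ Finset.range (N2 T ω), g2 j ω) := by
    intro ω
    set S1 : ℝ := ∑ j ∈ Finset.range (N1 T ω), ℓ (Z1 j ω) with hS1def
    set S2 : ℝ := ∑ j ∈ Finset.range (N2 T ω), Z2 j ω with hS2def
    have hS1nn : 0 ≤ S1 := Finset.sum_nonneg fun j _ => hℓpos _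
    have hS2nn : 0 ≤ S2 := Finset.sum_nonneg fun j _ => hZ2pos _ _
    have hCnn : 0 ≤ max lam0 β := le_trans hlam0.le (le_max_left _ _)
    have hBnn : 0 ≤ max lam0 β + S1 + S2 := by linarith
    have hbound : ∀ s ∈ Set.Ioc u t, lam s ω ≤ max lam0 β + S1 + S2 := by
      intro s hs
      obtain ⟨hus, hst⟩ := hs
      have hs0 : 0 ≤ s := hu.trans hus.le
      have hsT : s ≤ T := hst.trans htT
      have he0 : 0 < Real.exp (-(α * s)) := Real.exp_pos _
      have he1 : Real.exp (-(α * s)) ≤ 1 := by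
        rw [Real.exp_le_one_iff]
        nlinarith [mul_nonneg hα.le hs0]
      have h1 : β + (lam0 - β) * Real.exp (-(α * s)) ≤ max lam0 β := by
        rcases le_total lam0 β with h | h
        · have hnp : (lam0 - β) * Real.exp (-(α * s)) ≤ 0 :=
            mul_nonpos_iff.mpr (Or.inr ⟨sub_nonpos.mpr h, he0.le⟩)
          have := le_max_right lam0 β
          linarith
        · have hstep : (lam0 - β) * Real.exp (-(α * s)) ≤ (lam0 - β) * 1 :=
            mul_le_mul_of_nonneg_left he1 (by linarith)
          have := le_max_left lam0 β
          linarith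
      have hN1le : N1 s ω ≤ N1 T ω := by
        by_contra h
        push_neg at h
        exact lt_irrefl _ ((hτ1 T ω (N1 T ω)).mpr (((hτ1 s ω (N1 T ω)).mp h).trans hsT))
      have hN2le : N2 s ω ≤ N2 T ω := by
        by_contra h
        push_neg at h
        exact lt_irrefl _ ((hτ2 T ω (N2 T ω)).mpr (((hτ2 s ω (N2 T ω)).mp h).trans hsT))
      have h2 : ∑ j ∈ Finset.range (N1 s ω),
          Real.exp (-(α * (s - T1 j ω))) * ℓ (Z1 j ω) ≤ S1 := by
        calc ∑ j ∈ Finset.range (N1 s ω), Real.exp (-(α * (s - T1 j ω))) * ℓ (Z1 j ω)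
            ≤ ∑ j ∈ Finset.range (N1 s ω), ℓ (Z1 j ω) := by
              refine Finset.sum_le_sum fun j hj => ?_
              have hTj : T1 j ω ≤ s := (hτ1 s ω j).mp (Finset.mem_range.mp hj)
              have hone : Real.exp (-(α * (s - T1 j ω))) ≤ 1 := by
                rw [Real.exp_le_one_iff]
                nlinarith [mul_nonneg hα.le (sub_nonneg.mpr hTj)]
              calc Real.exp (-(α * (s - T1 j ω))) * ℓ (Z1 j ω)
                  ≤ 1 * ℓ (Z1 j ω) := mul_le_mul_of_nonneg_right hone (hℓpos _)
                _ = ℓ (Z1 j ω) := one_mul _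
          _ ≤ S1 := Finset.sum_le_sum_of_subset_of_nonneg
              (Finset.range_subset_range.mpr hN1le) fun j _ _ => hℓpos _
      have h3 : ∑ j ∈ Finset.range (N2 s ω),
          Real.exp (-(α * (s - T2 j ω))) * Z2 j ω ≤ S2 := by
        calc ∑ j ∈ Finset.range (N2 s ω), Real.exp (-(α * (s - T2 j ω))) * Z2 j ω
            ≤ ∑ j ∈ Finset.range (N2 s ω), Z2 j ω := by
              refine Finset.sum_le_sum fun j hj => ?_
              have hTj : T2 j ω ≤ s := (hτ2 s ω j).mp (Finset.mem_range.mp hj)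
              have hone : Real.exp (-(α * (s - T2 j ω))) ≤ 1 := by
                rw [Real.exp_le_one_iff]
                nlinarith [mul_nonneg hα.le (sub_nonneg.mpr hTj)]
              calc Real.exp (-(α * (s - T2 j ω))) * Z2 j ω
                  ≤ 1 * Z2 j ω := mul_le_mul_of_nonneg_right hone (hZ2pos _ _)
                _ = Z2 j ω := one_mul _
          _ ≤ S2 := Finset.sum_le_sum_of_subset_of_nonneg
              (Finset.range_subset_range.mpr hN2le) fun j _ _ => hZ2pos _ _
      rw [hlam]
      linarith
    have hI : ∫ s in Set.Ioc u t, lam s ω ≤ ε * (max lam0 β + S1 + S2) := by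
      have hεB : (t - u) * (max lam0 β + S1 + S2) ≤ ε * (max lam0 β + S1 + S2) :=
        mul_le_mul_of_nonneg_right htu hBnn
      refine le_trans ?_ hεB
      by_cases hint : IntegrableOn (fun s => lam s ω) (Set.Ioc u t) volume
      · have hmono := setIntegral_mono_on hint
          (integrableOn_const (by rw [Real.volume_Ioc]; exact ENNReal.ofReal_ne_top))
          measurableSet_Ioc hbound
        rw [setIntegral_const, Real.volume_real_Ioc,
          max_eq_left (by linarith), smul_eq_mul] at hmono
        exact hmono
      · rw [integral_undef hint]
        exact mul_nonneg (by linarith) hBnn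
    calc ENNReal.ofReal (Real.exp (∫ s in Set.Ioc u t, lam s ω))
        ≤ ENNReal.ofReal (Real.exp (ε * (max lam0 β + S1 + S2))) :=
          ENNReal.ofReal_le_ofReal (Real.exp_le_exp.mpr hI)
      _ = ENNReal.ofReal (Real.exp (ε * max lam0 β)) *
          ((∏ j ∈ Finset.range (N1 T ω), g1 j ω) * ∏ j ∈ Finset.range (N2 T ω), g2 j ω) := by
          rw [show ε * (max lam0 β + S1 + S2)
              = ε * max lam0 β + (ε * S1 + ε * S2) by ring,
            Real.exp_add, Real.exp_add,
            ENNReal.ofReal_mul (Real.exp_pos _).le, ENNReal.ofReal_mul (Real.exp_pos _).le]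
          congr 2
          · rw [hS1def, Finset.mul_sum, Real.exp_sum,
              ENNReal.ofReal_prod_of_nonneg fun j _ => (Real.exp_pos _).le]
          · rw [hS2def, Finset.mul_sum, Real.exp_sum,
              ENNReal.ofReal_prod_of_nonneg fun j _ => (Real.exp_pos _).le]
  -- assemble
  calc ∫⁻ ω, ENNReal.ofReal (Real.exp (∫ s in Set.Ioc u t, lam s ω)) ∂μ
      ≤ ∫⁻ ω, ENNReal.ofReal (Real.exp (ε * max lam0 β)) *
          ((∏ j ∈ Finset.range (N1 T ω), g1 j ω)
            * ∏ j ∈ Finset.range (N2 T ω), g2 j ω) ∂μ := lintegral_mono hpt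
    _ = ENNReal.ofReal (Real.exp (ε * max lam0 β)) *
          ∫⁻ ω, (∏ j ∈ Finset.range (N1 T ω), g1 j ω)
            * ∏ j ∈ Finset.range (N2 T ω), g2 j ω ∂μ :=
        lintegral_const_mul' _ _ ENNReal.ofReal_ne_top
    _ = ENNReal.ofReal (Real.exp (ε * max lam0 β)) *
          ((∫⁻ ω, ∏ j ∈ Finset.range (N1 T ω), g1 j ω ∂μ)
            * ∫⁻ ω, ∏ j ∈ Finset.range (N2 T ω), g2 j ω ∂μ) := by
        rw [lintegral_mul_eq_lintegral_mul_lintegral_of_independent_measurableSpace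
          (sup_le (hle 0) (hle 2)) (sup_le (hle 1) (hle 3)) hIndSup hG1 hG2]
    _ < ⊤ := by
        rw [hF1, hF2]
        exact ENNReal.mul_lt_top ENNReal.ofReal_lt_top
          (ENNReal.mul_lt_top ENNReal.ofReal_lt_top ENNReal.ofReal_lt_top)
end

section
/- Between two consecutive claim arrival times, the filter π_t(λ) is dominated by the deterministic-decay process Y: for t ∈ [T^{(1)}_n ∧ T, T^{(1)}_{n+1} ∧ T), π_t(λ) ≤ β̃ + (π_{T^{(1)}_n}(λ) − β̃) e^{−α(t − T^{(1)}_n)} where β̃ = β + ρ E[Z^{(2)}]/α. -/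
open MeasureTheory Real

/-- **Exponential-decay domination of the filter between consecutive claim arrivals.**
Between two consecutive claim arrival times, the filter `π_t(λ)` (denoted `p`) is dominated by
the solution of `dY_t = α(β̃ − Y_t) dt` started from the filter value at the last jump time:
for `t ∈ [T¹_n ∧ T, T¹_{n+1} ∧ T)`,
`π_t(λ) ≤ β̃ + (π_{T¹_n}(λ) − β̃) e^{−α(t − T¹_n)}`, where `β̃ = β + ρ E[Z²]/α`.
Between jumps the filter satisfies
`dπ_t(λ) = α(β̃ − π_t(λ)) dt − (π_t(λ²) − π_t(λ)²) dt` and, by Jensen's inequality,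
`π_t(λ²) ≥ π_t(λ)²` (here `q` denotes `π_t(λ²)`). -/
theorem filter_dominated_between_jumps
    {Ω : Type*} (α β ρ mZ2 T : ℝ) (hα : 0 < α) (hβ : 0 < β) (hρ : 0 < ρ) (hmZ2 : 0 ≤ mZ2)
    (hT : 0 < T)
    -- jump times `T¹_n < T¹_{n+1}` of the claim arrival process
    (Tn Tnext : Ω → ℝ) (hTn : ∀ ω, 0 ≤ Tn ω) (hjump : ∀ ω, Tn ω < Tnext ω)
    -- `p t ω = π_t(λ)(ω)` and `q t ω = π_t(λ²)(ω)`
    (p q : ℝ → Ω → ℝ)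
    -- Jensen's inequality for the filter
    (hJensen : ∀ t ω, (p t ω) ^ 2 ≤ q t ω)
    -- the Kushner–Stratonovich dynamics of `π_t(λ)` between consecutive jumps
    (hderiv : ∀ ω, ∀ s : ℝ, Tn ω ≤ s → s < min (Tnext ω) T →
      HasDerivWithinAt (fun r => p r ω)
        (α * ((β + ρ * mZ2 / α) - p s ω) - (q s ω - (p s ω) ^ 2))
        (Set.Ici (Tn ω)) s) :
    ∀ ω, ∀ t : ℝ, Tn ω ≤ t → t < min (Tnext ω) T →
      p t ω ≤ (β + ρ * mZ2 / α)
        + (p (Tn ω) ω - (β + ρ * mZ2 / α)) * Real.exp (-(α * (t - Tn ω))) := by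
  intro ω t ht htlt
  set c : ℝ := β + ρ * mZ2 / α with hc
  rcases eq_or_lt_of_le ht with heq | hlt
  · rw [← heq]
    simp
  -- auxiliary function g s = (p s ω - c) * exp (α * (s - Tn ω))
  set g : ℝ → ℝ := fun s => (p s ω - c) * Real.exp (α * (s - Tn ω)) with hg
  have key : g t ≤ g (Tn ω) := by
    have hcont : ContinuousOn g (Set.Icc (Tn ω) t) := by
      have hpcont : ContinuousOn (fun r => p r ω) (Set.Icc (Tn ω) t) := by
        intro s hs
        exact ((hderiv ω s hs.1 (lt_of_le_of_lt hs.2 htlt)).continuousWithinAt).mono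
          (Set.Icc_subset_Ici_self)
      exact (hpcont.sub continuousOn_const).mul
        (Real.continuous_exp.comp (by continuity)).continuousOn
    have hgd' : ∀ s ∈ interior (Set.Icc (Tn ω) t), HasDerivAt g
        (-(q s ω - (p s ω) ^ 2) * Real.exp (α * (s - Tn ω))) s := by
      intro s hs
      rw [interior_Icc] at hs
      have hsmem : s < min (Tnext ω) T := lt_trans hs.2 htlt
      have hpd : HasDerivAt (fun r => p r ω)
          (α * (c - p s ω) - (q s ω - (p s ω) ^ 2)) s := by
        have := hderiv ω s hs.1.le hsmem
        exact this.hasDerivAt (Ici_mem_nhds hs.1)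
      have hed : HasDerivAt (fun r : ℝ => Real.exp (α * (r - Tn ω)))
          (α * Real.exp (α * (s - Tn ω))) s := by
        have h1 : HasDerivAt (fun r : ℝ => α * (r - Tn ω)) α s := by
          simpa using ((hasDerivAt_id s).sub_const (Tn ω)).const_mul α
        simpa [mul_comm, Function.comp_def] using (Real.hasDerivAt_exp _).comp s h1
      have hgd : HasDerivAt g
          ((α * (c - p s ω) - (q s ω - (p s ω) ^ 2)) * Real.exp (α * (s - Tn ω))
            + (p s ω - c) * (α * Real.exp (α * (s - Tn ω)))) s :=
        (hpd.sub_const c).mul hed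
      have hval : (α * (c - p s ω) - (q s ω - (p s ω) ^ 2)) * Real.exp (α * (s - Tn ω))
          + (p s ω - c) * (α * Real.exp (α * (s - Tn ω)))
          = -(q s ω - (p s ω) ^ 2) * Real.exp (α * (s - Tn ω)) := by ring
      exact hval ▸ hgd
    have hanti : AntitoneOn g (Set.Icc (Tn ω) t) :=
      antitoneOn_of_deriv_nonpos (convex_Icc _ _) hcont
        (fun s hs => (hgd' s hs).differentiableAt.differentiableWithinAt)
        (fun s hs => by
          rw [(hgd' s hs).deriv]
          apply mul_nonpos_of_nonpos_of_nonneg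
          · linarith [hJensen s ω]
          · exact (Real.exp_pos _).le)
    exact hanti (Set.left_mem_Icc.2 hlt.le) (Set.right_mem_Icc.2 hlt.le) hlt.le
  have hgTn : g (Tn ω) = p (Tn ω) ω - c := by simp [hg]
  have hgt : g t = (p t ω - c) * Real.exp (α * (t - Tn ω)) := rfl
  rw [hgTn, hgt] at key
  have hexp : (0:ℝ) < Real.exp (α * (t - Tn ω)) := Real.exp_pos _
  have h2 : p t ω - c ≤ (p (Tn ω) ω - c) * Real.exp (-(α * (t - Tn ω))) := by
    rw [Real.exp_neg]
    calc p t ω - c = (p t ω - c) * Real.exp (α * (t - Tn ω)) * (Real.exp (α * (t - Tn ω)))⁻¹ := by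
          field_simp
      _ ≤ (p (Tn ω) ω - c) * (Real.exp (α * (t - Tn ω)))⁻¹ := by
          apply mul_le_mul_of_nonneg_right key (by positivity)
  linarith
end

section
/- For proportional reinsurance Φ(z,u) = uz, u ∈ [0,1], with expected-value-principle premium q^u_t = (1+θ_R) E[Z^{(1)}] π_{t−}(λ)(1 − u_t), the optimal retention u*_t equals 0 (full reinsurance) if θ_R < θ^F_t, equals 1 (no reinsurance) if θ_R > θ^N_t, and otherwise is the unique solution ū ∈ (0,1) of (1+θ_R) E[Z^{(1)}] = ∫_0^∞ ((w+θ(z))/w) z e^{−ηe^{r(T−t)}z(1−u)} F^{(1)}(dz), where θ^F_t = (1/E[Z^{(1)}]) ∫_0^∞ ((W^N_{t−}+Θ^{W^N}_t(z))/W^N_{t−}) z e^{−ηe^{r(T−t)}z} F^{(1)}(dz) − 1 and θ^N_t = (1/E[Z^{(1)}]) ∫_0^∞ ((W^N_{t−}+Θ^{W^N}_t(z))/W^N_{t−}) z F^{(1)}(dz) − 1; moreover θ^F_t < θ^N_t. -/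
open MeasureTheory Real

lemma aux_integral_pos {μ : Measure ℝ} [IsProbabilityMeasure μ] {f : ℝ → ℝ}
    (hf : Integrable f μ) (hpos : ∀ᵐ z ∂μ, 0 < f z) : 0 < ∫ z, f z ∂μ := by
  rw [integral_pos_iff_support_of_nonneg_ae (hpos.mono fun z h => h.le) hf]
  have hsupp : ∀ᵐ z ∂μ, z ∈ Function.support f := hpos.mono fun z h => ne_of_gt h
  have hc : μ (Function.support f)ᶜ = 0 := by
    simpa [Function.support, Filter.eventually_iff, mem_ae_iff] using hsupp
  by_contra hcon
  push_neg at hcon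
  have h0 : μ (Function.support f) = 0 := le_antisymm hcon zero_le
  have hle := measure_union_le (μ := μ) (Function.support f) (Function.support f)ᶜ
  rw [Set.union_compl_self] at hle
  simp [h0, hc, measure_univ] at hle

set_option maxHeartbeats 1000000 in

/-- **Optimal proportional reinsurance under the expected value principle.**
For proportional reinsurance `Φ(z,u) = uz`, `u ∈ [0,1]`, with premium
`q^u = (1+θ_R) E[Z¹] π_{t−}(λ)(1−u)`, there are two thresholds `θ^F < θ^N` (depending on the
BSDE solution `(W^N, Θ^{W^N})`, here `w = W^N_{t−}` and `θ = Θ^{W^N}_t(·)`) such that the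
optimal retention is `0` (full reinsurance) if `θ_R < θ^F`, `1` (no reinsurance) if
`θ_R > θ^N`, and otherwise the unique `ū ∈ (0,1)` solving
`(1+θ_R)E[Z¹] = ∫ ((w+θ(z))/w) z e^{−ηe^{r(T−t)}z(1−ū)} F¹(dz)`.
Here the driver is
`g(u) = −wηe^{r(T−t)}(1+θ_R)E[Z¹]p(1−u) − p∫ (w+θ(z))(e^{−ηe^{r(T−t)}z(1−u)}−1) F¹(dz)`. -/
theorem optimal_proportional_reinsurance
    (η r T t w p θR : ℝ) (hη : 0 < η) (ht : t ≤ T) (hw : 0 < w) (hp : 0 < p) (hθR : 0 < θR)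
    (F1 : Measure ℝ) [IsProbabilityMeasure F1]
    -- the claim sizes are strictly positive with finite exponential moments
    (hz : ∀ᵐ z ∂F1, 0 < z)
    (hmean : Integrable (fun z : ℝ => z) F1) (hmeanpos : 0 < ∫ z, z ∂F1)
    (θ : ℝ → ℝ) (hθmeas : Measurable θ)
    -- `w + θ(z) > 0` (positivity of the value process after a jump)
    (hwθ : ∀ᵐ z ∂F1, 0 < w + θ z)
    -- integrability of the relevant integrands
    (hint : Integrable (fun z => (w + θ z) * z) F1)
    (hint' : Integrable (fun z => w + θ z) F1)
    -- the driver of the BSDE as a function of the retention level `u`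
    (g : ℝ → ℝ)
    (hg : ∀ u, g u
      = -(w * η * Real.exp (r * (T - t)) * ((1 + θR) * (∫ z, z ∂F1) * p * (1 - u)))
        - p * ∫ z, (w + θ z)
            * (Real.exp (-(η * Real.exp (r * (T - t)) * z * (1 - u))) - 1) ∂F1) :
    -- the thresholds are ordered: `θ^F < θ^N`
    ((1 / ∫ z, z ∂F1)
        * (∫ z, ((w + θ z) / w) * z * Real.exp (-(η * Real.exp (r * (T - t)) * z)) ∂F1) - 1
      < (1 / ∫ z, z ∂F1) * (∫ z, ((w + θ z) / w) * z ∂F1) - 1) ∧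
    -- full reinsurance below `θ^F`
    (θR < (1 / ∫ z, z ∂F1)
        * (∫ z, ((w + θ z) / w) * z * Real.exp (-(η * Real.exp (r * (T - t)) * z)) ∂F1) - 1 →
      IsMaxOn g (Set.Icc (0 : ℝ) 1) 0) ∧
    -- null reinsurance above `θ^N`
    ((1 / ∫ z, z ∂F1) * (∫ z, ((w + θ z) / w) * z ∂F1) - 1 < θR →
      IsMaxOn g (Set.Icc (0 : ℝ) 1) 1) ∧
    -- in the intermediate regime, the unique interior solution of the stationarity equation
    -- is optimal
    ((1 / ∫ z, z ∂F1)
        * (∫ z, ((w + θ z) / w) * z * Real.exp (-(η * Real.exp (r * (T - t)) * z)) ∂F1) - 1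
        ≤ θR →
      θR ≤ (1 / ∫ z, z ∂F1) * (∫ z, ((w + θ z) / w) * z ∂F1) - 1 →
      ∃ ub ∈ Set.Icc (0 : ℝ) 1,
        ((1 + θR) * (∫ z, z ∂F1)
          = ∫ z, ((w + θ z) / w) * z
              * Real.exp (-(η * Real.exp (r * (T - t)) * z * (1 - ub))) ∂F1) ∧
        IsMaxOn g (Set.Icc (0 : ℝ) 1) ub ∧
        ∀ v ∈ Set.Icc (0 : ℝ) 1,
          ((1 + θR) * (∫ z, z ∂F1)
            = ∫ z, ((w + θ z) / w) * z
                * Real.exp (-(η * Real.exp (r * (T - t)) * z * (1 - v))) ∂F1) → v = ub) := by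
  set a := η * Real.exp (r * (T - t)) with ha_def
  have ha : 0 < a := mul_pos hη (Real.exp_pos _)
  set M := ∫ z, z ∂F1 with hM_def
  have hM : 0 < M := hmeanpos
  have mθ : Measurable fun z : ℝ => w + θ z := measurable_const.add hθmeas
  have mexp : ∀ s : ℝ, Measurable fun z : ℝ => Real.exp (-(a * z * s)) :=
    fun s => Real.measurable_exp.comp (((measurable_const.mul measurable_id).mul_const s).neg)
  have hexp_le_one : ∀ s : ℝ, 0 ≤ s → ∀ z : ℝ, 0 < z → Real.exp (-(a * z * s)) ≤ 1 := by
    intro s hs z hz0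
    calc Real.exp (-(a * z * s)) ≤ Real.exp 0 :=
          Real.exp_le_exp.mpr (by nlinarith [mul_pos ha hz0, mul_nonneg (mul_pos ha hz0).le hs])
      _ = 1 := Real.exp_zero
  have intZE : ∀ s : ℝ, 0 ≤ s →
      Integrable (fun z => (w + θ z) * z * Real.exp (-(a * z * s))) F1 := by
    intro s hs
    refine hint.mono' ((mθ.mul measurable_id).mul (mexp s)).aestronglyMeasurable ?_
    filter_upwards [hz, hwθ] with z hz0 hwz
    have hnn : 0 ≤ (w + θ z) * z := mul_nonneg hwz.le hz0.le
    rw [Real.norm_eq_abs, abs_of_nonneg (mul_nonneg hnn (Real.exp_pos _).le)]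
    calc (w + θ z) * z * Real.exp (-(a * z * s)) ≤ (w + θ z) * z * 1 :=
          mul_le_mul_of_nonneg_left (hexp_le_one s hs z hz0) hnn
      _ = (w + θ z) * z := mul_one _
  have intE : ∀ s : ℝ, 0 ≤ s →
      Integrable (fun z => (w + θ z) * Real.exp (-(a * z * s))) F1 := by
    intro s hs
    refine hint'.mono' (mθ.mul (mexp s)).aestronglyMeasurable ?_
    filter_upwards [hz, hwθ] with z hz0 hwz
    rw [Real.norm_eq_abs, abs_of_nonneg (mul_nonneg hwz.le (Real.exp_pos _).le)]
    calc (w + θ z) * Real.exp (-(a * z * s)) ≤ (w + θ z) * 1 :=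
          mul_le_mul_of_nonneg_left (hexp_le_one s hs z hz0) hwz.le
      _ = w + θ z := mul_one _
  have Isplit : ∀ s : ℝ, 0 ≤ s →
      ∫ z, (w + θ z) * (Real.exp (-(a * z * s)) - 1) ∂F1
        = (∫ z, (w + θ z) * Real.exp (-(a * z * s)) ∂F1) - ∫ z, (w + θ z) ∂F1 := by
    intro s hs
    rw [← integral_sub (intE s hs) hint']
    congr 1; funext z; ring
  -- the function H
  set H : ℝ → ℝ := fun u => ∫ z, ((w + θ z) / w) * z * Real.exp (-(a * z * (1 - u))) ∂F1
    with hH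
  have Hval : ∀ u : ℝ, H u = (∫ z, (w + θ z) * z * Real.exp (-(a * z * (1 - u))) ∂F1) / w := by
    intro u
    rw [hH]
    simp only
    rw [← integral_div]
    congr 1; funext z; ring
  have e0 : (∫ z, ((w + θ z) / w) * z * Real.exp (-(a * z)) ∂F1) = H 0 := by
    rw [hH]; norm_num
  have e1 : (∫ z, ((w + θ z) / w) * z ∂F1) = H 1 := by
    rw [hH]; norm_num
  -- strict monotonicity of H
  have Hmono : ∀ u v : ℝ, 0 ≤ u → u < v → v ≤ 1 → H u < H v := by
    intro u v hu huv hv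
    have hsu : (0:ℝ) ≤ 1 - u := by linarith
    have hsv : (0:ℝ) ≤ 1 - v := by linarith
    have hiu := intZE (1 - u) hsu
    have hiv := intZE (1 - v) hsv
    have key : 0 < ∫ z, ((w + θ z) * z * Real.exp (-(a * z * (1 - v)))
        - (w + θ z) * z * Real.exp (-(a * z * (1 - u)))) ∂F1 := by
      refine aux_integral_pos (hiv.sub hiu) ?_
      filter_upwards [hz, hwθ] with z hz0 hwz
      have hlt : Real.exp (-(a * z * (1 - u))) < Real.exp (-(a * z * (1 - v))) :=
        Real.exp_lt_exp.mpr (by nlinarith [mul_pos ha hz0])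
      nlinarith [mul_pos hwz hz0]
    rw [integral_sub hiv hiu] at key
    rw [Hval u, Hval v]
    exact (div_lt_div_iff_of_pos_right hw).mpr (by linarith)
  have hwa : w * η * Real.exp (r * (T - t)) = w * a := by rw [ha_def]; ring
  have hg' : ∀ u : ℝ, g u
      = -(w * a * ((1 + θR) * M * p * (1 - u)))
        - p * ∫ z, (w + θ z) * (Real.exp (-(a * z * (1 - u))) - 1) ∂F1 := by
    intro u; rw [hg u, hwa]
  -- key comparison inequality
  have gdiff : ∀ u0 u : ℝ, 0 ≤ u0 → u0 ≤ 1 → 0 ≤ u → u ≤ 1 →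
      p * (a * w * ((u0 - u) * ((1 + θR) * M - H u0))) ≤ g u0 - g u := by
    intro u0 u h00 h01 h10 h11
    have s0 : (0:ℝ) ≤ 1 - u0 := by linarith
    have s1 : (0:ℝ) ≤ 1 - u := by linarith
    have bnd : (∫ z, (w + θ z) * Real.exp (-(a * z * (1 - u0))) ∂F1)
        - (∫ z, (w + θ z) * Real.exp (-(a * z * (1 - u))) ∂F1)
        ≤ a * (u0 - u) * ∫ z, (w + θ z) * z * Real.exp (-(a * z * (1 - u0))) ∂F1 := by
      rw [← integral_sub (intE _ s0) (intE _ s1), ← integral_const_mul]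
      refine integral_mono_ae ((intE _ s0).sub (intE _ s1)) ((intZE _ s0).const_mul _) ?_
      filter_upwards [hz, hwθ] with z hz0 hwz
      have hid : Real.exp (-(a * z * (1 - u)))
          = Real.exp (-(a * z * (1 - u0))) * Real.exp (a * z * (u - u0)) := by
        rw [← Real.exp_add]; congr 1; ring
      have hE0pos : (0:ℝ) < Real.exp (-(a * z * (1 - u0))) := Real.exp_pos _
      rw [hid]
      nlinarith [mul_nonneg (mul_nonneg hwz.le hE0pos.le)
        (by linarith [Real.add_one_le_exp (a * z * (u - u0))] :
          (0:ℝ) ≤ Real.exp (a * z * (u - u0)) - (a * z * (u - u0) + 1))]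
    have hK0 : (∫ z, (w + θ z) * z * Real.exp (-(a * z * (1 - u0))) ∂F1) = w * H u0 := by
      rw [Hval u0]; field_simp
      congr 1; funext z; ring
    rw [hK0] at bnd
    have expand : g u0 - g u
        = w * a * ((1 + θR) * M * p) * (u0 - u)
          - p * ((∫ z, (w + θ z) * Real.exp (-(a * z * (1 - u0))) ∂F1)
            - (∫ z, (w + θ z) * Real.exp (-(a * z * (1 - u))) ∂F1)) := by
      rw [hg' u0, hg' u, Isplit _ s0, Isplit _ s1]; ring
    have hmul := mul_le_mul_of_nonneg_left bnd hp.le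
    rw [expand]
    nlinarith [hmul]
  refine ⟨?_, ?_, ?_, ?_⟩
  · rw [e0, e1]
    have := Hmono 0 1 le_rfl one_pos le_rfl
    have h1M : 0 < 1 / M := by positivity
    nlinarith
  · intro hθ
    rw [e0] at hθ
    have hneg : (1 + θR) * M - H 0 < 0 := by
      have : (1 + θR) * M < ((1 / M) * H 0) * M := by nlinarith
      rw [one_div, inv_mul_eq_div, div_mul_cancel₀ _ (ne_of_gt hM)] at this
      linarith
    refine isMaxOn_iff.mpr fun u hu => ?_
    have key := gdiff 0 u le_rfl zero_le_one hu.1 hu.2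
    have h0 : 0 ≤ p * (a * w * ((0 - u) * ((1 + θR) * M - H 0))) := by
      have : 0 ≤ (0 - u) * ((1 + θR) * M - H 0) := by
        nlinarith [hu.1, hneg]
      positivity
    linarith
  · intro hθ
    rw [e1] at hθ
    have hposd : 0 < (1 + θR) * M - H 1 := by
      have : ((1 / M) * H 1) * M < (1 + θR) * M := by nlinarith
      rw [one_div, inv_mul_eq_div, div_mul_cancel₀ _ (ne_of_gt hM)] at this
      linarith
    refine isMaxOn_iff.mpr fun u hu => ?_
    have key := gdiff 1 u zero_le_one le_rfl hu.1 hu.2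
    have h0 : 0 ≤ p * (a * w * ((1 - u) * ((1 + θR) * M - H 1))) := by
      have h1u : 0 ≤ 1 - u := by linarith [hu.2]
      have : 0 ≤ (1 - u) * ((1 + θR) * M - H 1) := mul_nonneg h1u hposd.le
      positivity
    linarith
  · intro hF hN
    rw [e0] at hF
    rw [e1] at hN
    have h0le : H 0 ≤ (1 + θR) * M := by
      have : ((1 / M) * H 0) * M ≤ (1 + θR) * M := by nlinarith
      rw [one_div, inv_mul_eq_div, div_mul_cancel₀ _ (ne_of_gt hM)] at this
      linarith
    have h1ge : (1 + θR) * M ≤ H 1 := by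
      have : (1 + θR) * M ≤ ((1 / M) * H 1) * M := by nlinarith
      rw [one_div, inv_mul_eq_div, div_mul_cancel₀ _ (ne_of_gt hM)] at this
      linarith
    -- continuity of the truncated version of H
    set φ : ℝ → ℝ :=
      fun u => ∫ z, ((w + θ z) / w) * z * Real.exp (-(a * z * (1 - min u 1))) ∂F1 with hφ
    have contφ : Continuous φ := by
      rw [hφ]
      refine continuous_of_dominated
        (F := fun u z => ((w + θ z) / w) * z * Real.exp (-(a * z * (1 - min u 1))))
        (bound := fun z => ((w + θ z) * z) / w)
        (fun u => ?_) (fun u => ?_) (hint.div_const w) ?_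
      · exact (((mθ.div_const w).mul measurable_id).mul
          (Real.measurable_exp.comp
            (((measurable_const.mul measurable_id).mul
              measurable_const).neg))).aestronglyMeasurable
      · filter_upwards [hz, hwθ] with z hz0 hwz
        have hmin : (0:ℝ) ≤ 1 - min u 1 := by
          have : min u 1 ≤ 1 := min_le_right _ _
          linarith
        have hnn : 0 ≤ (w + θ z) / w * z := mul_nonneg (by positivity) hz0.le
        rw [Real.norm_eq_abs, abs_of_nonneg (mul_nonneg hnn (Real.exp_pos _).le)]
        calc (w + θ z) / w * z * Real.exp (-(a * z * (1 - min u 1)))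
            ≤ (w + θ z) / w * z * 1 :=
              mul_le_mul_of_nonneg_left (hexp_le_one _ hmin z hz0) hnn
          _ = ((w + θ z) * z) / w := by ring
      · filter_upwards with z
        exact continuous_const.mul (Real.continuous_exp.comp
          (((continuous_const.mul ((continuous_const.sub
            (continuous_id.min continuous_const))))).neg))
    have hφH : ∀ u : ℝ, u ∈ Set.Icc (0:ℝ) 1 → φ u = H u := by
      intro u hu
      rw [hφ, hH]
      simp only
      rw [min_eq_left hu.2]
    have hmem : (1 + θR) * M ∈ Set.Icc (φ 0) (φ 1) := by
      rw [hφH 0 ⟨le_rfl, zero_le_one⟩, hφH 1 ⟨zero_le_one, le_rfl⟩]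
      exact ⟨h0le, h1ge⟩
    obtain ⟨ub, hub, hval⟩ :=
      intermediate_value_Icc zero_le_one contφ.continuousOn hmem
    have hHub : H ub = (1 + θR) * M := by rw [← hφH ub hub, hval]
    have heq : (1 + θR) * M
        = ∫ z, ((w + θ z) / w) * z * Real.exp (-(a * z * (1 - ub))) ∂F1 := by
      rw [← hHub, hH]
    refine ⟨ub, hub, heq, ?_, ?_⟩
    · refine isMaxOn_iff.mpr fun u hu => ?_
      have key := gdiff ub u hub.1 hub.2 hu.1 hu.2
      have h0 : p * (a * w * ((ub - u) * ((1 + θR) * M - H ub))) = 0 := by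
        rw [hHub]; ring
      linarith
    · intro v hv hveq
      have hHv : H v = (1 + θR) * M := by
        rw [hH]
        exact hveq.symm
      by_contra hne
      rcases lt_or_gt_of_ne hne with hlt | hgt
      · have := Hmono v ub hv.1 hlt hub.2
        rw [hHv, hHub] at this
        exact lt_irrefl _ this
      · have := Hmono ub v hub.1 hgt hv.2
        rw [hHv, hHub] at this
        exact lt_irrefl _ this
end
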